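/- arXiv:1808.05274 — 2 statements merged into one kernel-verified Lean document; each statement's English description precedes it below -/
import Mathlib

section
/- Let f₁, …, f_n : ℝ^m → ℝ be convex and differentiable with L-Lipschitz gradients, set f = (1/n) Σᵢ fᵢ, let Ω ⊆ ℝ^m be convex, and let x* ∈ Ω minimize f over Ω (so ⟨∇f(x*), x − x*⟩ ≥ 0 for all x ∈ Ω). Then for all x, x₀ ∈ Ω, the average (1/n) Σᵢ ‖∇fᵢ(x) − ∇fᵢ(x₀) + ∇f(x₀) − ∇f(x)‖² ≤ 6L ( 2(f(x) − f(x*)) + (f(x₀) − f(x*)) ). -/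
open scoped InnerProductSpace
open InnerProductSpace

set_option linter.unusedSectionVars false

section Aux
variable {E : Type*} [NormedAddCommGroup E] [InnerProductSpace ℝ E] [CompleteSpace E]

lemma line_hasDerivAt (x v : E) (t : ℝ) : HasDerivAt (fun t : ℝ => x + t • v) v t := by
  simpa using ((hasDerivAt_id t).smul_const v).const_add x

lemma comp_line_hasDerivAt {f : E → ℝ} (hf : Differentiable ℝ f) (x v : E) (t : ℝ) :
    HasDerivAt (fun t : ℝ => f (x + t • v)) ⟪gradient f (x + t • v), v⟫_ℝ t := by
  have h1 := (hf (x + t • v)).hasFDerivAt.comp_hasDerivAt t (line_hasDerivAt x v t)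
  refine h1.congr_deriv ?_
  rw [gradient, toDual_symm_apply]

lemma descent_lemma {f : E → ℝ} (hf : Differentiable ℝ f) {L : ℝ} (hL : 0 ≤ L)
    (hlip : ∀ a b, ‖gradient f a - gradient f b‖ ≤ L * ‖a - b‖) (x y : E) :
    f y ≤ f x + ⟪gradient f x, y - x⟫_ℝ + L / 2 * ‖y - x‖ ^ 2 := by
  set v := y - x with hv
  set ψ : ℝ → ℝ := fun t =>
    f (x + t • v) - t * ⟪gradient f x, v⟫_ℝ - L / 2 * t ^ 2 * ‖v‖ ^ 2 with hψ
  have hd : ∀ t : ℝ, HasDerivAt ψ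
      (⟪gradient f (x + t • v) - gradient f x, v⟫_ℝ - L * t * ‖v‖ ^ 2) t := by
    intro t
    have h1 := comp_line_hasDerivAt hf x v t
    have h2 : HasDerivAt (fun t : ℝ => t * ⟪gradient f x, v⟫_ℝ)
        ⟪gradient f x, v⟫_ℝ t := by simpa using (hasDerivAt_id t).mul_const _
    have h3 : HasDerivAt (fun t : ℝ => L / 2 * t ^ 2 * ‖v‖ ^ 2) (L * t * ‖v‖ ^ 2) t := by
      have := ((hasDerivAt_pow 2 t).const_mul (L / 2)).mul_const (‖v‖ ^ 2)
      refine this.congr_deriv ?_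
      push_cast
      ring
    have h4 := (h1.sub h2).sub h3
    refine h4.congr_deriv ?_
    rw [inner_sub_left]
  have mono : AntitoneOn ψ (Set.Icc 0 1) := by
    apply antitoneOn_of_deriv_nonpos (convex_Icc 0 1)
    · exact fun t _ => ((hd t).differentiableAt.continuousAt).continuousWithinAt
    · exact fun t _ => (hd t).differentiableAt.differentiableWithinAt
    · intro t ht
      rw [interior_Icc] at ht
      rw [(hd t).deriv]
      have h1 : ⟪gradient f (x + t • v) - gradient f x, v⟫_ℝ ≤ L * t * ‖v‖ ^ 2 := by
        calc ⟪gradient f (x + t • v) - gradient f x, v⟫_ℝ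
            ≤ ‖gradient f (x + t • v) - gradient f x‖ * ‖v‖ := real_inner_le_norm _ _
          _ ≤ (L * ‖(x + t • v) - x‖) * ‖v‖ :=
              mul_le_mul_of_nonneg_right (hlip _ _) (norm_nonneg _)
          _ = L * t * ‖v‖ ^ 2 := by
              rw [add_sub_cancel_left, norm_smul, Real.norm_eq_abs, abs_of_pos ht.1]
              ring
      linarith
  have key : ψ 1 ≤ ψ 0 := mono (by norm_num) (by norm_num) zero_le_one
  have h0 : ψ 0 = f x := by simp [hψ]
  have h1 : ψ 1 = f y - ⟪gradient f x, v⟫_ℝ - L / 2 * ‖v‖ ^ 2 := by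
    simp [hψ, hv]
  rw [h0, h1] at key
  linarith

lemma convex_grad_le {f : E → ℝ} (hconv : ConvexOn ℝ Set.univ f)
    (hf : Differentiable ℝ f) (x y : E) :
    f x + ⟪gradient f x, y - x⟫_ℝ ≤ f y := by
  set v := y - x with hv
  have hline : ConvexOn ℝ Set.univ (fun t : ℝ => f (x + t • v)) := by
    have h := hconv.comp_affineMap (AffineMap.lineMap x y)
    simp only [Set.preimage_univ] at h
    have he : (fun t : ℝ => f (x + t • v)) = f ∘ (AffineMap.lineMap x y : ℝ →ᵃ[ℝ] E) := by
      funext t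
      simp only [Function.comp_apply, AffineMap.lineMap_apply_module, hv]
      congr 1
      module
    rw [he]
    exact h
  have hslope := hline.le_slope_of_hasDerivAt (Set.mem_univ (0:ℝ)) (Set.mem_univ (1:ℝ))
    zero_lt_one (comp_line_hasDerivAt hf x v 0)
  rw [slope_def_field] at hslope
  simp only [zero_smul, add_zero, one_smul] at hslope
  have hy : x + v = y := by rw [hv]; abel
  rw [hy] at hslope
  norm_num at hslope
  linarith [show ⟪gradient f x, v⟫_ℝ = fderiv ℝ f x v by rw [gradient, toDual_symm_apply]]


lemma inner_convexOn (c : E) : ConvexOn ℝ Set.univ (fun w : E => -⟪c, w⟫_ℝ) := by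
  refine ⟨convex_univ, fun a _ b _ s t hs ht hst => ?_⟩
  show -⟪c, s • a + t • b⟫_ℝ ≤ s • -⟪c, a⟫_ℝ + t • -⟪c, b⟫_ℝ
  rw [inner_add_right, real_inner_smul_right, real_inner_smul_right]
  simp only [smul_eq_mul]
  ring_nf
  linarith

lemma gradient_sub_inner {f : E → ℝ} (hf : Differentiable ℝ f) (c z : E) :
    gradient (fun w => f w - ⟪c, w⟫_ℝ) z = gradient f z - c := by
  have hc : HasFDerivAt (fun w : E => ⟪c, w⟫_ℝ) (toDual ℝ E c) z := by
    exact (toDual ℝ E c).hasFDerivAt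
  have h : HasFDerivAt (fun w => f w - ⟪c, w⟫_ℝ)
      (fderiv ℝ f z - toDual ℝ E c) z := (hf z).hasFDerivAt.sub hc
  rw [gradient, h.fderiv, map_sub, LinearIsometryEquiv.symm_apply_apply]
  rfl

lemma coco {f : E → ℝ} (hconv : ConvexOn ℝ Set.univ f) (hf : Differentiable ℝ f)
    {L : ℝ} (hL : 0 ≤ L)
    (hlip : ∀ a b, ‖gradient f a - gradient f b‖ ≤ L * ‖a - b‖) (x y : E) :
    ‖gradient f x - gradient f y‖ ^ 2 ≤ 2 * L * (f x - f y - ⟪gradient f y, x - y⟫_ℝ) := by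
  rcases hL.eq_or_lt with rfl | hLpos
  · have h := hlip x y
    simp only [zero_mul] at h
    have : ‖gradient f x - gradient f y‖ = 0 := le_antisymm h (norm_nonneg _)
    rw [this]
    norm_num
  · set φ : E → ℝ := fun w => f w - ⟪gradient f y, w⟫_ℝ with hφ
    have hφdiff : Differentiable ℝ φ := hf.sub (toDual ℝ E (gradient f y)).differentiable
    have hφgrad : ∀ z, gradient φ z = gradient f z - gradient f y := gradient_sub_inner hf _
    have hφconv : ConvexOn ℝ Set.univ φ := by
      have h := hconv.add (inner_convexOn (gradient f y))
      have he : φ = fun w => f w + -⟪gradient f y, w⟫_ℝ := by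
        funext w; rw [hφ]; ring
      rw [he]; exact h
    have hφlip : ∀ a b, ‖gradient φ a - gradient φ b‖ ≤ L * ‖a - b‖ := by
      intro a b
      rw [hφgrad, hφgrad, sub_sub_sub_cancel_right]
      exact hlip a b
    have hmin : ∀ z, φ y ≤ φ z := by
      intro z
      have := convex_grad_le hφconv hφdiff y z
      rw [hφgrad y, sub_self, inner_zero_left] at this
      linarith
    set w := gradient f x - gradient f y with hw
    set z : E := x - L⁻¹ • w with hz
    have hd := descent_lemma hφdiff hL hφlip x z
    have hzx : z - x = -(L⁻¹ • w) := by rw [hz]; abel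
    have hinner : ⟪gradient φ x, z - x⟫_ℝ = -(L⁻¹ * ‖w‖ ^ 2) := by
      rw [hφgrad x, ← hw, hzx, inner_neg_right, real_inner_smul_right,
        real_inner_self_eq_norm_sq]
    have hnorm : ‖z - x‖ ^ 2 = L⁻¹ ^ 2 * ‖w‖ ^ 2 := by
      rw [hzx, norm_neg, norm_smul, Real.norm_eq_abs, abs_of_pos (by positivity), mul_pow]
    have hkey : φ y ≤ φ x - ‖w‖ ^ 2 / (2 * L) := by
      have := hmin z
      rw [hinner, hnorm] at hd
      have hL' : L ≠ 0 := ne_of_gt hLpos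
      have : φ y ≤ φ x + -(L⁻¹ * ‖w‖ ^ 2) + L / 2 * (L⁻¹ ^ 2 * ‖w‖ ^ 2) := le_trans this hd
      have heq : φ x + -(L⁻¹ * ‖w‖ ^ 2) + L / 2 * (L⁻¹ ^ 2 * ‖w‖ ^ 2)
          = φ x - ‖w‖ ^ 2 / (2 * L) := by field_simp; ring
      linarith [heq ▸ this]
    have hφdiffxy : φ x - φ y = f x - f y - ⟪gradient f y, x - y⟫_ℝ := by
      simp only [hφ, inner_sub_right]
      ring
    have hfin : ‖w‖ ^ 2 / (2 * L) ≤ φ x - φ y := by linarith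
    rw [hφdiffxy] at hfin
    calc ‖w‖ ^ 2 = 2 * L * (‖w‖ ^ 2 / (2 * L)) := by field_simp
      _ ≤ 2 * L * (f x - f y - ⟪gradient f y, x - y⟫_ℝ) :=
          mul_le_mul_of_nonneg_left hfin (by positivity)

lemma gradient_avg {n : ℕ} (f : Fin n → E → ℝ) (hdiff : ∀ i, Differentiable ℝ (f i)) (y : E) :
    gradient (fun x => (1 / (n : ℝ)) * ∑ i, f i x) y
      = (1 / (n : ℝ)) • ∑ i, gradient (f i) y := by
  have hs : HasFDerivAt (fun x => ∑ i, f i x) (∑ i, fderiv ℝ (f i) y) y :=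
    HasFDerivAt.fun_sum (fun i _ => (hdiff i y).hasFDerivAt)
  have hF : HasFDerivAt (fun x => (1 / (n : ℝ)) * ∑ i, f i x)
      ((1 / (n : ℝ)) • ∑ i, fderiv ℝ (f i) y) y := hs.const_mul _
  rw [gradient, hF.fderiv, map_smul, map_sum]
  rfl

lemma var_le {n : ℕ} (b : Fin n → E) :
    ∑ i, ‖b i - (1 / (n : ℝ)) • ∑ j, b j‖ ^ 2 ≤ ∑ i, ‖b i‖ ^ 2 := by
  rcases Nat.eq_zero_or_pos n with rfl | hn
  · simp
  set Eb := (1 / (n : ℝ)) • ∑ j, b j with hEb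
  have hsum : ∑ j, b j = (n : ℝ) • Eb := by
    rw [hEb, smul_smul]
    rw [mul_one_div, div_self (by exact_mod_cast hn.ne'), one_smul]
  have expand : ∑ i, ‖b i - Eb‖ ^ 2
      = (∑ i, ‖b i‖ ^ 2) - 2 * ⟪∑ i, b i, Eb⟫_ℝ + (n : ℝ) * ‖Eb‖ ^ 2 := by
    simp_rw [norm_sub_sq_real]
    rw [Finset.sum_add_distrib, Finset.sum_sub_distrib, ← Finset.mul_sum, ← sum_inner,
      Finset.sum_const, Finset.card_univ, Fintype.card_fin, nsmul_eq_mul]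
  have hip : ⟪∑ i, b i, Eb⟫_ℝ = (n : ℝ) * ‖Eb‖ ^ 2 := by
    rw [hsum, real_inner_smul_left, real_inner_self_eq_norm_sq]
  rw [expand, hip]
  have : 0 ≤ (n : ℝ) * ‖Eb‖ ^ 2 := by positivity
  linarith

end Aux


/-- Variance bound for the variance-reduced stochastic gradient (Lemma 1 of the
paper, written as a deterministic average): for `F = (1/n) Σᵢ fᵢ` and a minimizer
`x*` of `F` over a convex set `Ω`,
`(1/n) Σᵢ ‖∇fᵢ(x) − ∇fᵢ(x₀) + ∇F(x₀) − ∇F(x)‖² ≤ 6L (2(F x − F x*) + (F x₀ − F x*))`. -/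
theorem variance_reduced_gradient_bound {m n : ℕ}
    (f : Fin n → EuclideanSpace ℝ (Fin m) → ℝ) (L : ℝ)
    (hconv : ∀ i, ConvexOn ℝ Set.univ (f i))
    (hdiff : ∀ i, Differentiable ℝ (f i))
    (hlip : ∀ i x y, ‖gradient (f i) x - gradient (f i) y‖ ≤ L * ‖x - y‖)
    (F : EuclideanSpace ℝ (Fin m) → ℝ)
    (hF : F = fun x => (1 / (n : ℝ)) * ∑ i, f i x)
    (Ω : Set (EuclideanSpace ℝ (Fin m))) (hΩconv : Convex ℝ Ω)
    (xstar : EuclideanSpace ℝ (Fin m)) (hxstarΩ : xstar ∈ Ω)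
    (hmin : ∀ x ∈ Ω, F xstar ≤ F x)
    (hfoc : ∀ x ∈ Ω, 0 ≤ ⟪gradient F xstar, x - xstar⟫_ℝ) :
    ∀ x ∈ Ω, ∀ x₀ ∈ Ω,
      (1 / (n : ℝ)) *
          ∑ i, ‖gradient (f i) x - gradient (f i) x₀ + gradient F x₀ - gradient F x‖ ^ 2 ≤
        6 * L * (2 * (F x - F xstar) + (F x₀ - F xstar)) := by
  intro x hx x₀ hx₀
  rcases Nat.eq_zero_or_pos n with rfl | hn
  · simp [hF]
  rcases Nat.eq_zero_or_pos m with rfl | hm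
  · haveI : Subsingleton (EuclideanSpace ℝ (Fin 0)) := ⟨fun a b => by ext i; exact i.elim0⟩
    have hz : ∀ v : EuclideanSpace ℝ (Fin 0), ‖v‖ = 0 := fun v => by
      rw [Subsingleton.elim v 0, norm_zero]
    have hxx : x = xstar := Subsingleton.elim _ _
    have hx0x : x₀ = xstar := Subsingleton.elim _ _
    subst hxx hx0x
    simp [hz]
  have hL : 0 ≤ L := by
    have h := hlip ⟨0, hn⟩ (EuclideanSpace.single ⟨0, hm⟩ (1 : ℝ)) 0
    rw [sub_zero, EuclideanSpace.norm_single] at h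
    have h2 := norm_nonneg
      (gradient (f ⟨0, hn⟩) (EuclideanSpace.single ⟨0, hm⟩ (1 : ℝ)) - gradient (f ⟨0, hn⟩) 0)
    simp only [norm_one, mul_one] at h
    linarith
  have hG : ∀ y, gradient F y = (1 / (n : ℝ)) • ∑ i, gradient (f i) y := by
    intro y
    rw [hF]
    exact gradient_avg f hdiff y
  -- cocoercivity averaged
  have avg : ∀ y ∈ Ω, (1 / (n : ℝ)) * ∑ i, ‖gradient (f i) y - gradient (f i) xstar‖ ^ 2
      ≤ 2 * L * (F y - F xstar) := by
    intro y hy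
    have sumco : ∑ i, ‖gradient (f i) y - gradient (f i) xstar‖ ^ 2
        ≤ 2 * L * ((∑ i, f i y) - (∑ i, f i xstar)
            - ⟪∑ i, gradient (f i) xstar, y - xstar⟫_ℝ) := by
      calc ∑ i, ‖gradient (f i) y - gradient (f i) xstar‖ ^ 2
          ≤ ∑ i, 2 * L * (f i y - f i xstar - ⟪gradient (f i) xstar, y - xstar⟫_ℝ) :=
            Finset.sum_le_sum fun i _ => coco (hconv i) (hdiff i) hL (hlip i) y xstar
        _ = _ := by
            rw [← Finset.mul_sum, Finset.sum_sub_distrib, Finset.sum_sub_distrib, sum_inner]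
    have h2 := mul_le_mul_of_nonneg_left sumco (by positivity : (0:ℝ) ≤ 1 / (n : ℝ))
    have h3 : 0 ≤ (1 / (n : ℝ)) * ⟪∑ i, gradient (f i) xstar, y - xstar⟫_ℝ := by
      have h := hfoc y hy
      rwa [hG xstar, real_inner_smul_left] at h
    have h4 : 0 ≤ 2 * L * ((1 / (n : ℝ)) * ⟪∑ i, gradient (f i) xstar, y - xstar⟫_ℝ) :=
      mul_nonneg (by positivity) h3
    have hFy : F y = (1 / (n : ℝ)) * ∑ i, f i y := by rw [hF]
    have hFs : F xstar = (1 / (n : ℝ)) * ∑ i, f i xstar := by rw [hF]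
    have heq : (1 / (n : ℝ)) * (2 * L * ((∑ i, f i y) - (∑ i, f i xstar)
          - ⟪∑ i, gradient (f i) xstar, y - xstar⟫_ℝ))
        = 2 * L * ((1 / (n : ℝ)) * ∑ i, f i y - (1 / (n : ℝ)) * ∑ i, f i xstar)
          - 2 * L * ((1 / (n : ℝ)) * ⟪∑ i, gradient (f i) xstar, y - xstar⟫_ℝ) := by
      ring
    rw [hFy, hFs]
    linarith
  -- variance step
  have varstep : ∀ y, ∑ i, ‖(gradient (f i) y - gradient (f i) xstar)
        - (gradient F y - gradient F xstar)‖ ^ 2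
      ≤ ∑ i, ‖gradient (f i) y - gradient (f i) xstar‖ ^ 2 := by
    intro y
    have hEb : gradient F y - gradient F xstar
        = (1 / (n : ℝ)) • ∑ i, (gradient (f i) y - gradient (f i) xstar) := by
      rw [hG y, hG xstar, ← smul_sub, Finset.sum_sub_distrib]
    rw [hEb]
    exact var_le _
  -- pointwise split
  have ptw : ∀ i, ‖gradient (f i) x - gradient (f i) x₀ + gradient F x₀ - gradient F x‖ ^ 2
      ≤ 2 * ‖(gradient (f i) x - gradient (f i) xstar) - (gradient F x - gradient F xstar)‖ ^ 2
        + 2 * ‖(gradient (f i) x₀ - gradient (f i) xstar)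
            - (gradient F x₀ - gradient F xstar)‖ ^ 2 := by
    intro i
    set p := (gradient (f i) x - gradient (f i) xstar)
      - (gradient F x - gradient F xstar) with hp
    set q := (gradient (f i) x₀ - gradient (f i) xstar)
      - (gradient F x₀ - gradient F xstar) with hq
    have hv : gradient (f i) x - gradient (f i) x₀ + gradient F x₀ - gradient F x = p - q := by
      rw [hp, hq]; abel
    rw [hv]
    nlinarith [norm_sub_le p q, norm_nonneg p, norm_nonneg q, norm_nonneg (p - q),
      sq_nonneg (‖p‖ - ‖q‖)]
  have havgx := avg x hx
  have havgx0 := avg x₀ hx₀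
  have hvarx := varstep x
  have hvarx0 := varstep x₀
  have hDx : 0 ≤ F x - F xstar := sub_nonneg.mpr (hmin x hx)
  have hDx0 : 0 ≤ F x₀ - F xstar := sub_nonneg.mpr (hmin x₀ hx₀)
  calc (1 / (n : ℝ)) *
        ∑ i, ‖gradient (f i) x - gradient (f i) x₀ + gradient F x₀ - gradient F x‖ ^ 2
      ≤ (1 / (n : ℝ)) * ∑ i,
          (2 * ‖(gradient (f i) x - gradient (f i) xstar)
              - (gradient F x - gradient F xstar)‖ ^ 2
           + 2 * ‖(gradient (f i) x₀ - gradient (f i) xstar)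
              - (gradient F x₀ - gradient F xstar)‖ ^ 2) :=
        mul_le_mul_of_nonneg_left (Finset.sum_le_sum fun i _ => ptw i) (by positivity)
    _ = 2 * ((1 / (n : ℝ)) * ∑ i, ‖(gradient (f i) x - gradient (f i) xstar)
              - (gradient F x - gradient F xstar)‖ ^ 2)
        + 2 * ((1 / (n : ℝ)) * ∑ i, ‖(gradient (f i) x₀ - gradient (f i) xstar)
              - (gradient F x₀ - gradient F xstar)‖ ^ 2) := by
        rw [Finset.sum_add_distrib, ← Finset.mul_sum, ← Finset.mul_sum]
        ring
    _ ≤ 2 * ((1 / (n : ℝ)) * ∑ i, ‖gradient (f i) x - gradient (f i) xstar‖ ^ 2)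
        + 2 * ((1 / (n : ℝ)) * ∑ i, ‖gradient (f i) x₀ - gradient (f i) xstar‖ ^ 2) := by
        have e1 := mul_le_mul_of_nonneg_left hvarx (by positivity : (0:ℝ) ≤ 1 / (n : ℝ))
        have e2 := mul_le_mul_of_nonneg_left hvarx0 (by positivity : (0:ℝ) ≤ 1 / (n : ℝ))
        linarith
    _ ≤ 2 * (2 * L * (F x - F xstar)) + 2 * (2 * L * (F x₀ - F xstar)) := by
        linarith
    _ ≤ 6 * L * (2 * (F x - F xstar) + (F x₀ - F xstar)) := by
        nlinarith [mul_nonneg hL hDx, mul_nonneg hL hDx0]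
end

section
/- Let f : ℝ^n → ℝ be convex, differentiable, and L-smooth, let Ω ⊆ ℝ^n be a nonempty compact convex set of diameter at most D, let x* ∈ Ω minimize f over Ω, and fix δ > 0. Suppose w ∈ Ω, γ ∈ (0, 1], g ∈ ℝ^n, and v ∈ Ω satisfies ⟨g, v⟩ ≤ min_{u ∈ Ω} ⟨g, u⟩ + (L D²/2) γ δ. Then the point w⁺ = (1 − γ) w + γ v satisfies f(w⁺) − f(x*) ≤ (1 − γ)(f(w) − f(x*)) + (L D²/2) γ² (1 + δ) + γ D ‖g − ∇f(w)‖. -/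
open scoped InnerProductSpace

variable {n : ℕ}

lemma fw_line_deriv (f : EuclideanSpace ℝ (Fin n) → ℝ) (hdiff : Differentiable ℝ f)
    (x y : EuclideanSpace ℝ (Fin n)) (t : ℝ) :
    HasDerivAt (fun s : ℝ => f (x + s • (y - x)))
      ⟪gradient f (x + t • (y - x)), y - x⟫_ℝ t := by
  have hline : HasDerivAt (fun s : ℝ => x + s • (y - x)) (y - x) t := by
    simpa using ((hasDerivAt_id t).smul_const (y - x)).const_add x
  have hg := hasGradientAt_iff_hasFDerivAt.mp (hdiff (x + t • (y - x))).hasGradientAt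
  have := hg.comp_hasDerivAt t hline
  simpa [InnerProductSpace.toDual_apply_apply, Function.comp_def] using this

lemma fw_convex_grad (f : EuclideanSpace ℝ (Fin n) → ℝ)
    (hconv : ConvexOn ℝ Set.univ f) (hdiff : Differentiable ℝ f)
    (x y : EuclideanSpace ℝ (Fin n)) :
    f x + ⟪gradient f x, y - x⟫_ℝ ≤ f y := by
  have hφconv : ConvexOn ℝ Set.univ (fun s : ℝ => f (x + s • (y - x))) := by
    have h := hconv.comp_affineMap (AffineMap.lineMap x y)
    have heq : (fun s : ℝ => f (x + s • (y - x))) = f ∘ (AffineMap.lineMap x y) := by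
      funext s
      simp [AffineMap.lineMap_apply_module']
      congr 1
      module
    rw [heq]
    simpa using h
  have hd := fw_line_deriv f hdiff x y 0
  simp only [zero_smul, add_zero] at hd
  have hs := hφconv.le_slope_of_hasDerivAt (Set.mem_univ (0:ℝ)) (Set.mem_univ (1:ℝ))
    zero_lt_one hd
  rw [slope_def_field] at hs
  simp only [one_smul, zero_smul, add_zero, add_sub_cancel] at hs
  rw [show (1:ℝ) - 0 = 1 by norm_num, div_one] at hs
  linarith

lemma fw_descent (f : EuclideanSpace ℝ (Fin n) → ℝ) (L : ℝ) (hdiff : Differentiable ℝ f)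
    (hsmooth : ∀ a b, ‖gradient f a - gradient f b‖ ≤ L * ‖a - b‖)
    (x y : EuclideanSpace ℝ (Fin n)) :
    f y ≤ f x + ⟪gradient f x, y - x⟫_ℝ + L / 2 * ‖y - x‖ ^ 2 := by
  have hgcont : Continuous (gradient f) := by
    have : LipschitzWith (Real.toNNReal L) (gradient f) := by
      rw [lipschitzWith_iff_dist_le_mul]
      intro a b
      rw [dist_eq_norm, dist_eq_norm]
      refine (hsmooth a b).trans (mul_le_mul_of_nonneg_right ?_ (norm_nonneg _))
      rw [Real.coe_toNNReal']
      exact le_max_left _ _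
    exact this.continuous
  have hcont : Continuous (fun t : ℝ => ⟪gradient f (x + t • (y - x)), y - x⟫_ℝ) := by
    exact (hgcont.comp (by continuity)).inner continuous_const
  have hint : ∫ t in (0:ℝ)..1, ⟪gradient f (x + t • (y - x)), y - x⟫_ℝ
      = f (x + (1:ℝ) • (y - x)) - f (x + (0:ℝ) • (y - x)) := by
    refine intervalIntegral.integral_eq_sub_of_hasDerivAt
      (fun t _ => fw_line_deriv f hdiff x y t) ?_
    exact hcont.intervalIntegrable 0 1
  simp only [one_smul, zero_smul, add_zero, add_sub_cancel] at hint
  have hmono : ∫ t in (0:ℝ)..1, ⟪gradient f (x + t • (y - x)), y - x⟫_ℝ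
      ≤ ∫ t in (0:ℝ)..1, (⟪gradient f x, y - x⟫_ℝ + L * ‖y - x‖ ^ 2 * t) := by
    refine intervalIntegral.integral_mono_on zero_le_one (hcont.intervalIntegrable 0 1)
      ((by continuity : Continuous fun t : ℝ => ⟪gradient f x, y - x⟫_ℝ + L * ‖y - x‖ ^ 2 * t).intervalIntegrable 0 1) ?_
    intro t ht
    have key : ⟪gradient f (x + t • (y - x)) - gradient f x, y - x⟫_ℝ
        ≤ L * ‖y - x‖ ^ 2 * t := by
      refine (real_inner_le_norm _ _).trans ?_
      have h1 : ‖gradient f (x + t • (y - x)) - gradient f x‖ ≤ L * (t * ‖y - x‖) := by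
        have := hsmooth (x + t • (y - x)) x
        simpa [norm_smul, abs_of_nonneg ht.1] using this
      calc ‖gradient f (x + t • (y - x)) - gradient f x‖ * ‖y - x‖
          ≤ L * (t * ‖y - x‖) * ‖y - x‖ :=
            mul_le_mul_of_nonneg_right h1 (norm_nonneg _)
        _ = L * ‖y - x‖ ^ 2 * t := by ring
    have hid : ⟪gradient f (x + t • (y - x)), y - x⟫_ℝ
        = ⟪gradient f x, y - x⟫_ℝ + ⟪gradient f (x + t • (y - x)) - gradient f x, y - x⟫_ℝ := by
      rw [inner_sub_left]; ring
    rw [hid]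
    linarith
  have hval : ∫ t in (0:ℝ)..1, (⟪gradient f x, y - x⟫_ℝ + L * ‖y - x‖ ^ 2 * t)
      = ⟪gradient f x, y - x⟫_ℝ + L / 2 * ‖y - x‖ ^ 2 := by
    have hi2 : IntervalIntegrable (fun t : ℝ => L * ‖y - x‖ ^ 2 * t)
        MeasureTheory.volume 0 1 := by
      apply Continuous.intervalIntegrable; continuity
    rw [intervalIntegral.integral_add (intervalIntegrable_const) hi2,
      intervalIntegral.integral_const_mul, integral_id]
    norm_num
    ring
  linarith [hint ▸ hmono, hval ▸ hmono]

/-- One-step inequality for Frank-Wolfe with an inexact gradient `g` and an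
approximate linear-minimization oracle. -/
theorem frankWolfe_inexact_gradient_step {n : ℕ}
    (f : EuclideanSpace ℝ (Fin n) → ℝ) (L : ℝ)
    (hconv : ConvexOn ℝ Set.univ f) (hdiff : Differentiable ℝ f)
    (hsmooth : ∀ x y, ‖gradient f x - gradient f y‖ ≤ L * ‖x - y‖)
    (Ω : Set (EuclideanSpace ℝ (Fin n))) (hne : Ω.Nonempty)
    (hcomp : IsCompact Ω) (hΩconv : Convex ℝ Ω)
    (D : ℝ) (hD : ∀ x ∈ Ω, ∀ y ∈ Ω, ‖x - y‖ ≤ D)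
    (xstar : EuclideanSpace ℝ (Fin n)) (hxstarΩ : xstar ∈ Ω)
    (hmin : ∀ y ∈ Ω, f xstar ≤ f y)
    (δ : ℝ) (hδ : 0 < δ)
    (w : EuclideanSpace ℝ (Fin n)) (hw : w ∈ Ω)
    (γ : ℝ) (hγ0 : 0 < γ) (hγ1 : γ ≤ 1)
    (g : EuclideanSpace ℝ (Fin n))
    (v : EuclideanSpace ℝ (Fin n)) (hv : v ∈ Ω)
    (hvapprox : ∀ u ∈ Ω, ⟪g, v⟫_ℝ ≤ ⟪g, u⟫_ℝ + (L * D ^ 2 / 2) * γ * δ) :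
    f ((1 - γ) • w + γ • v) - f xstar ≤
      (1 - γ) * (f w - f xstar) + (L * D ^ 2 / 2) * γ ^ 2 * (1 + δ) +
        γ * D * ‖g - gradient f w‖ := by
  set G := gradient f w with hG
  set e := g - G with he
  -- basic facts
  have hDnn : 0 ≤ D := le_trans (norm_nonneg _) (hD w hw w hw)
  have hvwD : ‖v - w‖ ≤ D := hD v hv w hw
  have hLD2 : 0 ≤ L * D ^ 2 / 2 := by
    have h0 := hvapprox v hv
    nlinarith [mul_pos hγ0 hδ]
  -- ‖v - w‖² bound
  have hsq : L / 2 * ‖v - w‖ ^ 2 ≤ L * D ^ 2 / 2 := by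
    rcases le_or_gt 0 L with hL | hL
    · have h := mul_le_mul hvwD hvwD (norm_nonneg _) hDnn
      nlinarith
    · have hD2 : D ^ 2 ≤ 0 := by nlinarith
      have hD0 : D = 0 := by nlinarith [sq_nonneg D]
      have : ‖v - w‖ = 0 := le_antisymm (hD0 ▸ hvwD) (norm_nonneg _)
      rw [this, hD0]
      norm_num
  -- descent lemma at w⁺
  have hdesc := fw_descent f L hdiff hsmooth w ((1 - γ) • w + γ • v)
  have hstep : (1 - γ) • w + γ • v - w = γ • (v - w) := by
    rw [smul_sub, sub_smul, one_smul]
    abel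
  rw [hstep] at hdesc
  rw [real_inner_smul_right, norm_smul] at hdesc
  have hnorm : (‖γ‖ * ‖v - w‖) ^ 2 = γ ^ 2 * ‖v - w‖ ^ 2 := by
    rw [Real.norm_eq_abs, mul_pow, sq_abs]
  rw [hnorm] at hdesc
  -- key bound on ⟪G, v - w⟫
  have e1 : ⟪e, xstar - v⟫_ℝ ≤ ‖e‖ * D :=
    (real_inner_le_norm _ _).trans
      (mul_le_mul_of_nonneg_left (hD xstar hxstarΩ v hv) (norm_nonneg _))
  have e2 : f w + ⟪G, xstar - w⟫_ℝ ≤ f xstar := fw_convex_grad f hconv hdiff w xstar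
  have e3 := hvapprox xstar hxstarΩ
  have hid : ⟪G, v - w⟫_ℝ
      = ⟪g, v⟫_ℝ - ⟪g, xstar⟫_ℝ + ⟪G, xstar - w⟫_ℝ + ⟪e, xstar - v⟫_ℝ := by
    simp only [he, inner_sub_left, inner_sub_right]
    ring
  have hkey : ⟪G, v - w⟫_ℝ
      ≤ (f xstar - f w) + ‖e‖ * D + (L * D ^ 2 / 2) * γ * δ := by
    rw [hid]; linarith
  -- combine
  have h4 := mul_le_mul_of_nonneg_left hkey hγ0.le
  have h4' : γ * ((f xstar - f w) + ‖e‖ * D + (L * D ^ 2 / 2) * γ * δ)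
      = γ * (f xstar - f w) + γ * D * ‖e‖ + (L * D ^ 2 / 2) * γ ^ 2 * δ := by ring
  have h5 : L / 2 * (γ ^ 2 * ‖v - w‖ ^ 2) ≤ (L * D ^ 2 / 2) * γ ^ 2 := by
    have := mul_le_mul_of_nonneg_left hsq (sq_nonneg γ)
    nlinarith
  have hg1 : (1 - γ) * (f w - f xstar)
      = (f w - f xstar) + γ * (f xstar - f w) := by ring
  have hg2 : (L * D ^ 2 / 2) * γ ^ 2 * (1 + δ)
      = (L * D ^ 2 / 2) * γ ^ 2 + (L * D ^ 2 / 2) * γ ^ 2 * δ := by ring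
  linarith
end
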